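/- Let D be a Hurwitz series Φ(U) = Σ_{n≥0} (β_n/n!) U^n over the fraction field K of a characteristic-zero domain D. Then Φ(U) = F(e^U − 1) for some power series F(u) ∈ D[[u]] (i.e. Φ is u-integral) if and only if for every d ≥ 1, the element (1/d!)·(c_{d,1}β_1 + c_{d,2}β_2 + ⋯ + c_{d,d}β_d) lies in D, where the c_{d,r} are the Stirling-type coefficients defined by X(X−1)⋯(X−d+1) = Σ_{r=0}^d c_{d,r} X^r. -/

import Mathlib

open PowerSeries Finset

noncomputable section

namespace HurwitzAux

open Nat

variable {K : Type*} [Field K] [CharZero K]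

/-- `tK K n k = Σ_j (-1)^(k-j) C(k,j) j^n`, i.e. `n! ·` the `n`-th coefficient of
`(e^U - 1)^k`. -/
def tK (K : Type*) [Field K] [CharZero K] (n k : ℕ) : K :=
  ∑ j ∈ range (k+1), (-1 : K)^(k-j) * (k.choose j) * (j : K)^n

lemma coeff_exp_pow (j n : ℕ) : coeff n (exp K ^ j) = (j : K)^n / n ! := by
  rw [exp_pow_eq_rescale_exp, coeff_rescale, coeff_exp, map_div₀, map_one, map_natCast,
    mul_one_div]

lemma coeff_exp_sub_one_pow (n k : ℕ) :
    coeff n ((exp K - 1)^k) = tK K n k / n ! := by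
  rw [sub_pow, map_sum, tK, sum_div]
  refine Finset.sum_congr rfl fun j hj => ?_
  rw [mem_range, Nat.lt_succ_iff] at hj
  have h1 : ((-1 : K⟦X⟧)^(j+k) * exp K ^ j * 1^(k-j) * (k.choose j : K⟦X⟧))
      = C ((-1 : K)^(j+k) * (k.choose j : K)) * exp K ^ j := by
    rw [one_pow, map_mul, map_pow, map_neg, map_one, map_natCast]
    ring
  rw [h1, coeff_C_mul, coeff_exp_pow]
  have h2 : (-1 : K)^(j+k) = (-1 : K)^(k-j) := by
    rw [show j + k = (k-j) + 2*j by omega, pow_add, pow_mul]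
    simp
  rw [h2]
  ring

lemma tK_eq_zero {n k : ℕ} (h : n < k) : tK K n k = 0 := by
  have hc : coeff n ((exp K - 1)^k) = 0 := by
    have hx : (X : K⟦X⟧) ∣ (exp K - 1) := by
      rw [X_dvd_iff]; simp [constantCoeff_exp]
    exact X_pow_dvd_iff.mp (pow_dvd_pow_of_dvd hx k) n h
  have := coeff_exp_sub_one_pow (K := K) n k
  rw [hc] at this
  have hf : (n ! : K) ≠ 0 := Nat.cast_ne_zero.mpr n.factorial_ne_zero
  field_simp at this
  simpa using this.symm

lemma ortho (d k : ℕ) :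
    ∑ j ∈ range (k+1), (-1 : ℤ)^(k-j) * (k.choose j) * (j.choose d)
      = if d = k then 1 else 0 := by
  rcases le_or_gt d k with hdk | hdk
  · have hsub : Finset.Ico d (k+1) ⊆ range (k+1) := by
      intro x hx; rw [mem_range]; exact (mem_Ico.mp hx).2
    rw [← Finset.sum_subset hsub (fun x hx hxn => by
      rw [mem_range, Nat.lt_succ_iff] at hx
      rw [mem_Ico, not_and_or] at hxn
      have hxd : x < d := by omega
      rw [Nat.choose_eq_zero_of_lt hxd]
      simp)]
    rw [Finset.sum_Ico_eq_sum_range]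
    have hterm : ∀ m ∈ range (k + 1 - d),
        (-1 : ℤ)^(k-(d+m)) * (k.choose (d+m)) * ((d+m).choose d)
          = ((-1)^(k-d) * (k.choose d)) * ((-1)^m * ((k-d).choose m)) := by
      intro m hm
      rw [mem_range] at hm
      have hm' : d + m ≤ k := by omega
      have hcc : ((k.choose (d+m)) : ℤ) * ((d+m).choose d)
          = (k.choose d : ℤ) * ((k-d).choose m) := by
        have := Nat.choose_mul (n := k) (Nat.le_add_right d m)
        simp only [Nat.add_sub_cancel_left] at this
        exact_mod_cast congrArg (Nat.cast : ℕ → ℤ) this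
      have hsign : (-1 : ℤ)^(k-(d+m)) = (-1)^(k-d) * (-1)^m := by
        have hkd : k - d = (k - (d+m)) + m := by omega
        rw [hkd, pow_add, mul_assoc, ← pow_add,
          show m + m = 2*m from (two_mul m).symm, pow_mul]
        simp
      rw [hsign]
      linear_combination ((-1:ℤ)^(k-d) * (-1)^m) * hcc
    rw [Finset.sum_congr rfl hterm, ← Finset.mul_sum,
      show k + 1 - d = (k - d) + 1 by omega, Int.alternating_sum_range_choose]
    rcases eq_or_lt_of_le hdk with h | h
    · simp [h]
    · rw [if_neg (by omega), if_neg (by omega)]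
      ring
  · rw [if_neg (by omega)]
    refine Finset.sum_eq_zero fun j hj => ?_
    rw [mem_range, Nat.lt_succ_iff] at hj
    have hjd : j < d := by omega
    rw [Nat.choose_eq_zero_of_lt hjd]
    simp

omit [CharZero K] in
lemma eval_desc (d j : ℕ) :
    ∑ r ∈ range (d+1), ((descPochhammer ℤ d).coeff r : K) * (j : K)^r
      = (d ! : K) * (j.choose d : K) := by
  have h1 : (descPochhammer ℤ d).eval (j : ℤ)
      = ∑ r ∈ range (d+1), (descPochhammer ℤ d).coeff r * (j : ℤ)^r := by
    exact Polynomial.eval_eq_sum_range' (n := d+1)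
      (by rw [descPochhammer_natDegree]; omega) _
  have h2 : (descPochhammer ℤ d).eval (j : ℤ) = (j.descFactorial d : ℤ) := by
    exact_mod_cast descPochhammer_eval_eq_descFactorial ℤ j d
  have h3 := h1.symm.trans h2
  have h4 := congrArg (Int.cast : ℤ → K) h3
  push_cast at h4 ⊢
  rw [h4, Nat.descFactorial_eq_factorial_mul_choose]
  push_cast
  ring

lemma lemB (N d k : ℕ) (hd : d ≤ N) :
    ∑ r ∈ range (N+1), ((descPochhammer ℤ d).coeff r : K) * tK K r k
      = if d = k then (d ! : K) else 0 := by
  have hsub : range (d+1) ⊆ range (N+1) := by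
    intro x hx; rw [mem_range] at *; omega
  rw [← Finset.sum_subset hsub (fun r hr hrn => by
    rw [mem_range, Nat.lt_succ_iff] at hrn
    push_neg at hrn
    rw [Polynomial.coeff_eq_zero_of_natDegree_lt
      (by rw [descPochhammer_natDegree]; omega)]
    simp)]
  simp only [tK, Finset.mul_sum]
  rw [Finset.sum_comm]
  have hterm : ∀ j ∈ range (k+1),
      ∑ r ∈ range (d+1), ((descPochhammer ℤ d).coeff r : K)
        * ((-1 : K)^(k-j) * (k.choose j) * (j : K)^r)
      = (d ! : K) * ((-1 : K)^(k-j) * (k.choose j) * (j.choose d)) := by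
    intro j _
    have : ∑ r ∈ range (d+1), ((descPochhammer ℤ d).coeff r : K)
        * ((-1 : K)^(k-j) * (k.choose j) * (j : K)^r)
        = ((-1 : K)^(k-j) * (k.choose j)) *
          ∑ r ∈ range (d+1), ((descPochhammer ℤ d).coeff r : K) * (j : K)^r := by
      rw [Finset.mul_sum]; exact Finset.sum_congr rfl fun r _ => by ring
    rw [this, eval_desc]
    ring
  rw [Finset.sum_congr rfl hterm, ← Finset.mul_sum]
  have := congrArg (Int.cast : ℤ → K) (ortho d k)
  push_cast at this
  rw [this]
  split <;> simp

lemma lemD (n r : ℕ) (hr : r ≤ n) :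
    ∑ k ∈ range (n+1), tK K n k / (k ! : K) * ((descPochhammer ℤ k).coeff r : K)
      = if n = r then 1 else 0 := by
  set A : Matrix (Fin (n+1)) (Fin (n+1)) K := fun i k => tK K i k with hA
  set B : Matrix (Fin (n+1)) (Fin (n+1)) K :=
    fun d r => ((descPochhammer ℤ (d : ℕ)).coeff (r : ℕ) : K) / ((d : ℕ)! : K) with hB
  have hBA : B * A = 1 := by
    ext d k
    rw [Matrix.mul_apply, Matrix.one_apply]
    have : ∀ i : Fin (n+1), B d i * A i k
        = (fun m => ((descPochhammer ℤ (d : ℕ)).coeff m : K) * tK K m (k : ℕ) / ((d : ℕ)! : K)) i := by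
      intro i; simp only [hA, hB]; ring
    rw [Finset.sum_congr rfl fun i _ => this i,
      Fin.sum_univ_eq_sum_range
        (fun m => ((descPochhammer ℤ (d : ℕ)).coeff m : K) * tK K m (k : ℕ) / ((d : ℕ)! : K)),
      ← Finset.sum_div, lemB n (d : ℕ) (k : ℕ) (by omega)]
    have hfac : (((d : ℕ))! : K) ≠ 0 := Nat.cast_ne_zero.mpr (Nat.factorial_ne_zero _)
    by_cases h : d = k
    · rw [if_pos h, if_pos (by rw [h]), div_self hfac]
    · rw [if_neg h, if_neg (fun hc => h (Fin.ext hc)), zero_div]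
  have hAB : A * B = 1 := mul_eq_one_comm.mpr hBA
  have key := congrFun (congrFun hAB ⟨n, by omega⟩) ⟨r, by omega⟩
  rw [Matrix.mul_apply, Matrix.one_apply] at key
  have : ∀ i : Fin (n+1), A ⟨n, by omega⟩ i * B i ⟨r, by omega⟩
      = (fun m => tK K n m / (m ! : K) * ((descPochhammer ℤ m).coeff r : K)) i := by
    intro i; simp only [hA, hB]; ring
  rw [Finset.sum_congr rfl fun i _ => this i,
    Fin.sum_univ_eq_sum_range
      (fun m => tK K n m / (m ! : K) * ((descPochhammer ℤ m).coeff r : K))] at key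
  rw [key]
  by_cases h : n = r
  · rw [if_pos (Fin.ext h), if_pos h]
  · rw [if_neg (by simp [Fin.ext_iff]; omega), if_neg h]

end HurwitzAux

/-- Substitution of `e^U − 1` into a power series `F`: the power series
`F(e^U − 1)`, whose `n`-th coefficient is
`Σ_{k=0}^{n} (coeff k F) · coeff n ((e^U − 1)^k)`. -/
def substExp {K : Type*} [Field K] [CharZero K] (F : PowerSeries K) : PowerSeries K :=
  PowerSeries.mk fun n =>
    ∑ k ∈ Finset.range (n + 1),
      (PowerSeries.coeff k F) * PowerSeries.coeff n ((PowerSeries.exp K - 1) ^ k)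

/-- A Hurwitz series `Φ(U) = Σ (β_n/n!) Uⁿ` with `β_n` in a characteristic zero
domain `D` is `u`-integral (i.e. `Φ(U) = F(e^U − 1)` for some `F ∈ D[[u]]`) if and
only if for every `d ≥ 1` the element
`(1/d!)(c_{d,1}β_1 + ⋯ + c_{d,d}β_d)` lies in `D`, where the `c_{d,r}` are defined
by `X(X−1)⋯(X−d+1) = Σ_r c_{d,r} X^r`. -/
theorem hurwitz_u_integral_iff
    {D : Type*} [CommRing D] [IsDomain D] [CharZero D]
    (β : ℕ → D) :
    (∃ F : PowerSeries D,
        substExp (PowerSeries.map (algebraMap D (FractionRing D)) F) =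
          PowerSeries.mk (fun n =>
            algebraMap D (FractionRing D) (β n) / (n.factorial : FractionRing D))) ↔
      (∀ d : ℕ, 1 ≤ d → ∃ a : D,
          (algebraMap D (FractionRing D) a) * (d.factorial : FractionRing D) =
            ∑ r ∈ Finset.Icc 1 d,
              (((descPochhammer ℤ d).coeff r : ℤ) : FractionRing D) *
                algebraMap D (FractionRing D) (β r)) := by
  classical
  set K := FractionRing D
  set φ := algebraMap D K with hφ
  set b : ℕ → K := fun r => φ (β r) with hb
  have hfac : ∀ m : ℕ, (m.factorial : K) ≠ 0 :=
    fun m => Nat.cast_ne_zero.mpr m.factorial_ne_zero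
  -- `substExp (map φ F) = Φ` iff for all `n`, `Σ_k φ(F_k)·tK n k = b n`.
  have hcoeff : ∀ F : PowerSeries D,
      (substExp (PowerSeries.map φ F) =
        PowerSeries.mk (fun n => b n / (n.factorial : K))) ↔
      ∀ n : ℕ, ∑ k ∈ Finset.range (n+1), φ (PowerSeries.coeff k F) * HurwitzAux.tK K n k
        = b n := by
    intro F
    rw [PowerSeries.ext_iff]
    refine forall_congr' fun n => ?_
    rw [substExp, PowerSeries.coeff_mk, PowerSeries.coeff_mk]
    have : ∀ k ∈ Finset.range (n+1),
        (PowerSeries.coeff k (PowerSeries.map φ F)) *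
          PowerSeries.coeff n ((PowerSeries.exp K - 1) ^ k)
        = (φ (PowerSeries.coeff k F) * HurwitzAux.tK K n k) / (n.factorial : K) := by
      intro k _
      rw [PowerSeries.coeff_map, HurwitzAux.coeff_exp_sub_one_pow]
      ring
    rw [Finset.sum_congr rfl this, ← Finset.sum_div, div_left_inj' (hfac n)]
  constructor
  · rintro ⟨F, hF⟩ d hd
    have hn := (hcoeff F).mp hF
    refine ⟨PowerSeries.coeff d F, ?_⟩
    -- extend each b r to a sum over range (d+1)
    have hbr : ∀ r, r ≤ d →
        b r = ∑ k ∈ Finset.range (d+1), φ (PowerSeries.coeff k F) * HurwitzAux.tK K r k := by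
      intro r hr
      rw [← hn r]
      refine Finset.sum_subset (by intro x hx; rw [Finset.mem_range] at *; omega) ?_
      intro k hk hkn
      rw [Finset.mem_range, Nat.lt_succ_iff] at hkn
      push_neg at hkn
      rw [HurwitzAux.tK_eq_zero (by omega), mul_zero]
    have hIcc : ∑ r ∈ Finset.Icc 1 d,
        (((descPochhammer ℤ d).coeff r : ℤ) : K) * b r
        = ∑ r ∈ Finset.range (d+1), (((descPochhammer ℤ d).coeff r : ℤ) : K) * b r := by
      refine Finset.sum_subset (by intro x hx; rw [Finset.mem_Icc] at hx
                                   rw [Finset.mem_range]; omega) ?_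
      intro r hr hrn
      rw [Finset.mem_range, Nat.lt_succ_iff] at hr
      rw [Finset.mem_Icc] at hrn
      have hr0 : r = 0 := by omega
      subst hr0
      rw [Polynomial.coeff_zero_eq_eval_zero, descPochhammer_eval_zero,
        if_neg (by omega)]
      simp
    rw [hIcc]
    refine Eq.symm ?_
    calc ∑ r ∈ Finset.range (d+1), (((descPochhammer ℤ d).coeff r : ℤ) : K) * b r
        = ∑ r ∈ Finset.range (d+1), ∑ k ∈ Finset.range (d+1),
            φ (PowerSeries.coeff k F) *
              ((((descPochhammer ℤ d).coeff r : ℤ) : K) * HurwitzAux.tK K r k) := by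
          refine Finset.sum_congr rfl fun r hr => ?_
          rw [Finset.mem_range, Nat.lt_succ_iff] at hr
          rw [hbr r hr, Finset.mul_sum]
          exact Finset.sum_congr rfl fun k _ => by ring
      _ = ∑ k ∈ Finset.range (d+1), φ (PowerSeries.coeff k F) *
            ∑ r ∈ Finset.range (d+1),
              (((descPochhammer ℤ d).coeff r : ℤ) : K) * HurwitzAux.tK K r k := by
          rw [Finset.sum_comm]
          exact Finset.sum_congr rfl fun k _ => by rw [Finset.mul_sum]
      _ = φ (PowerSeries.coeff d F) * (d.factorial : K) := by
          rw [Finset.sum_congr rfl fun k hk => by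
            rw [HurwitzAux.lemB d d k le_rfl]]
          rw [Finset.sum_eq_single d]
          · rw [if_pos rfl]
          · intro k hk hkd
            rw [if_neg (fun hc => hkd hc.symm), mul_zero]
          · intro hmem
            exact absurd (Finset.self_mem_range_succ d) hmem
  · intro h
    set a : ℕ → D := fun d => if hd : 1 ≤ d then (h d hd).choose else β 0 with ha
    have haspec : ∀ d (hd : 1 ≤ d), φ (a d) * (d.factorial : K)
        = ∑ r ∈ Finset.Icc 1 d,
            (((descPochhammer ℤ d).coeff r : ℤ) : K) * b r := by
      intro d hd
      simp only [ha, dif_pos hd]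
      exact (h d hd).choose_spec
    refine ⟨PowerSeries.mk a, (hcoeff _).mpr fun n => ?_⟩
    simp only [PowerSeries.coeff_mk]
    -- uniform version of the defining property of `a`
    have hak : ∀ k, k ≤ n → φ (a k) * (k.factorial : K)
        = ∑ r ∈ Finset.range (n+1),
            (((descPochhammer ℤ k).coeff r : ℤ) : K) * b r := by
      intro k hk
      rcases Nat.eq_zero_or_pos k with hk0 | hk1
      · subst hk0
        have ha0 : a 0 = β 0 := by simp [ha]
        have hsum : ∑ r ∈ Finset.range (n+1),
            (((descPochhammer ℤ 0).coeff r : ℤ) : K) * b r = b 0 := by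
          rw [Finset.sum_eq_single 0]
          · simp [descPochhammer_zero]
          · intro r hr hr0
            rw [descPochhammer_zero, Polynomial.coeff_one, if_neg hr0]
            simp
          · intro hmem
            simp at hmem
        rw [hsum, ha0]
        simp [hb]
      · rw [haspec k hk1]
        refine Finset.sum_subset (by intro x hx; rw [Finset.mem_Icc] at hx
                                     rw [Finset.mem_range]; omega) ?_
        intro r hr hrn
        rw [Finset.mem_range, Nat.lt_succ_iff] at hr
        rw [Finset.mem_Icc, not_and_or] at hrn
        rcases hrn with h1 | h2
        · have hr0 : r = 0 := by omega
          subst hr0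
          rw [Polynomial.coeff_zero_eq_eval_zero, descPochhammer_eval_zero,
            if_neg (by omega)]
          simp
        · have hkr : k < r := by omega
          rw [Polynomial.coeff_eq_zero_of_natDegree_lt
            (by rw [descPochhammer_natDegree]; omega)]
          simp
    calc ∑ k ∈ Finset.range (n+1), φ (a k) * HurwitzAux.tK K n k
        = ∑ k ∈ Finset.range (n+1), HurwitzAux.tK K n k / (k.factorial : K) *
            (φ (a k) * (k.factorial : K)) := by
          refine Finset.sum_congr rfl fun k _ => ?_
          rw [div_mul_eq_mul_div]
          rw [mul_div_assoc, mul_div_cancel_right₀ _ (hfac k), mul_comm]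
      _ = ∑ k ∈ Finset.range (n+1), ∑ r ∈ Finset.range (n+1),
            b r * (HurwitzAux.tK K n k / (k.factorial : K) *
              (((descPochhammer ℤ k).coeff r : ℤ) : K)) := by
          refine Finset.sum_congr rfl fun k hk => ?_
          rw [Finset.mem_range, Nat.lt_succ_iff] at hk
          rw [hak k hk, Finset.mul_sum]
          exact Finset.sum_congr rfl fun r _ => by ring
      _ = ∑ r ∈ Finset.range (n+1), b r *
            ∑ k ∈ Finset.range (n+1), HurwitzAux.tK K n k / (k.factorial : K) *
              (((descPochhammer ℤ k).coeff r : ℤ) : K) := by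
          rw [Finset.sum_comm]
          exact Finset.sum_congr rfl fun r _ => by rw [Finset.mul_sum]
      _ = b n := by
          rw [Finset.sum_congr rfl fun r hr => by
            rw [HurwitzAux.lemD n r (by
              rw [Finset.mem_range, Nat.lt_succ_iff] at hr; exact hr)]]
          rw [Finset.sum_eq_single n]
          · rw [if_pos rfl, mul_one]
          · intro r hr hrn
            rw [if_neg (fun hc => hrn hc.symm), mul_zero]
          · intro hmem
            exact absurd (Finset.self_mem_range_succ n) hmem

end
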